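/- (Right dominance of Schreier spaces:) Let α be a countable ordinal (with a fixed choice of cofinal sequences defining the Schreier family S_α). If (k_n) and (ℓ_n) are strictly increasing sequences of natural numbers with k_n ≤ ℓ_n for all n, then ‖Σ a_n e_{k_n}‖_α ≤ ‖Σ a_n e_{ℓ_n}‖_α for every finitely supported real sequence (a_n); that is, the unit vector basis of X_α is 1-right dominant. -/

import Mathlib

open Filter Topology Metric

noncomputable section


/-! ### Schreier families on ℕ+ = {1,2,...} -/

/-- The successor step of the Schreier hierarchy. -/
def schreierSucc (S : Set (Finset ℕ+)) : Set (Finset ℕ+) :=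
  insert ∅ {F | ∃ (m : ℕ) (hm : 0 < m) (Es : Fin m → Finset ℕ+),
    (∀ i, Es i ∈ S) ∧ (∀ i, (Es i).Nonempty) ∧
    (∀ i j : Fin m, i < j → ∀ p ∈ Es i, ∀ q ∈ Es j, p < q) ∧
    (∀ p ∈ Es ⟨0, hm⟩, m ≤ (p : ℕ)) ∧
    F = Finset.univ.biUnion Es}

/-- The Schreier family `S_o`, relative to a choice `c` of cofinal sequences at limit
ordinals. -/
def schreier (c : Ordinal → ℕ+ → Ordinal) (o : Ordinal) : Set (Finset ℕ+) :=
  Ordinal.limitRecOn o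
    (insert ∅ {E | ∃ n : ℕ+, E = {n}})
    (fun _ S => schreierSucc S)
    (fun l _ ih =>
      insert ∅ {F | ∃ (n : ℕ+) (h : c l n < l), F ∈ ih (c l n) h ∧ ∀ k ∈ F, n ≤ k})

/-- `c` is a legitimate choice of cofinal sequences: at every countable limit ordinal `o`,
`c o` is a strictly increasing sequence of ordinals below `o` with supremum `o`. -/
def IsCofinalChoice (c : Ordinal → ℕ+ → Ordinal) : Prop :=
  ∀ o : Ordinal, Order.IsSuccLimit o → o < Ordinal.omega 1 →
    StrictMono (c o) ∧ (∀ n : ℕ+, c o n < o) ∧ ∀ b < o, ∃ n : ℕ+, b ≤ c o n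

/-- The Schreier norm `‖x‖_o = sup { Σ_{n ∈ E} |x n| : E ∈ S_o }` of a finitely supported
function. -/
def schreierNorm (c : Ordinal → ℕ+ → Ordinal) (o : Ordinal) (x : ℕ+ →₀ ℝ) : ℝ :=
  sSup {r : ℝ | ∃ E ∈ schreier c o, r = ∑ n ∈ E, |x n|}

/-- The finitely supported function `Σ_n a_n e_{k n}`. -/
def schreierComb (k : ℕ → ℕ+) (a : ℕ →₀ ℝ) : ℕ+ →₀ ℝ :=
  a.sum fun n r => Finsupp.single (k n) r

lemma schreier_zero (c : Ordinal → ℕ+ → Ordinal) :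
    schreier c 0 = insert ∅ {E | ∃ n : ℕ+, E = {n}} :=
  Ordinal.limitRecOn_zero _ _ _

lemma schreier_succ (c : Ordinal → ℕ+ → Ordinal) (o : Ordinal) :
    schreier c (Order.succ o) = schreierSucc (schreier c o) :=
  Ordinal.limitRecOn_succ _ _ _ _

lemma schreier_limit (c : Ordinal → ℕ+ → Ordinal) {o : Ordinal} (ho : Order.IsSuccLimit o) :
    schreier c o =
      insert ∅ {F | ∃ (n : ℕ+) (h : c o n < o),
        F ∈ schreier c (c o n) ∧ ∀ k ∈ F, n ≤ k} :=
  Ordinal.limitRecOn_limit _ _ _ _ ho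

lemma empty_mem_schreier (c : Ordinal → ℕ+ → Ordinal) (o : Ordinal) :
    (∅ : Finset ℕ+) ∈ schreier c o := by
  induction o using Ordinal.limitRecOn with
  | zero => rw [schreier_zero]; exact Set.mem_insert _ _
  | add_one o ih => rw [Ordinal.add_one_eq_succ, schreier_succ]; exact Set.mem_insert _ _
  | limit o ho ih => rw [schreier_limit c ho]; exact Set.mem_insert _ _

lemma schreier_spread (c : Ordinal → ℕ+ → Ordinal) (o : Ordinal) :
    ∀ (E F : Finset ℕ+) (φ : ℕ+ → ℕ+),
      (∀ q ∈ F, φ q ∈ E) →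
      (∀ q ∈ F, ∀ q' ∈ F, q < q' → φ q < φ q') →
      (∀ q ∈ F, φ q ≤ q) →
      E ∈ schreier c o → F ∈ schreier c o := by
  induction o using Ordinal.limitRecOn with
  | zero =>
    intro E F φ hmaps hmono hle hE
    rw [schreier_zero] at *
    rcases hE with hE | ⟨n, rfl⟩
    · subst hE
      have : F = ∅ := Finset.eq_empty_of_forall_notMem fun q hq => by
        simpa using hmaps q hq
      exact this ▸ Set.mem_insert _ _
    · rcases F.eq_empty_or_nonempty with rfl | ⟨q, hq⟩
      · exact Set.mem_insert _ _
      · have : F = {q} := by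
          apply Finset.eq_singleton_iff_unique_mem.2 ⟨hq, fun q' hq' => ?_⟩
          by_contra hne
          rcases lt_or_gt_of_ne hne with h | h
          · have := hmono q' hq' q hq h
            have h1 := hmaps q hq; have h2 := hmaps q' hq'
            simp only [Finset.mem_singleton] at h1 h2
            rw [h1, h2] at this; exact lt_irrefl _ this
          · have := hmono q hq q' hq' h
            have h1 := hmaps q hq; have h2 := hmaps q' hq'
            simp only [Finset.mem_singleton] at h1 h2
            rw [h1, h2] at this; exact lt_irrefl _ this
        exact this ▸ Set.mem_insert_of_mem _ ⟨q, rfl⟩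
  | add_one o ih =>
    intro E F φ hmaps hmono hle hE
    rw [Ordinal.add_one_eq_succ, schreier_succ] at hE ⊢
    rcases hE with hE | ⟨m, hm, Es, hEsmem, hEsne, hord, hmin, hEeq⟩
    · subst hE
      have : F = ∅ := Finset.eq_empty_of_forall_notMem fun q hq => by
        simpa using hmaps q hq
      exact this ▸ Set.mem_insert _ _
    · rcases F.eq_empty_or_nonempty with rfl | hFne
      · exact Set.mem_insert _ _
      -- index set of blocks hit by φ(F)
      classical
      set I : Finset (Fin m) :=
        Finset.univ.filter (fun i => ∃ q ∈ F, φ q ∈ Es i) with hI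
      have hIne : I.Nonempty := by
        obtain ⟨q, hq⟩ := hFne
        have := hmaps q hq
        rw [hEeq] at this
        obtain ⟨i, _, hi⟩ := Finset.mem_biUnion.1 this
        exact ⟨i, Finset.mem_filter.2 ⟨Finset.mem_univ _, q, hq, hi⟩⟩
      set m' : ℕ := I.card with hm'
      have hm'pos : 0 < m' := Finset.card_pos.2 hIne
      set e := I.orderIsoOfFin rfl with he
      set Fs : Fin m' → Finset ℕ+ :=
        fun j => F.filter (fun q => φ q ∈ Es (e j)) with hFs
      refine Set.mem_insert_of_mem _ ⟨m', hm'pos, Fs, ?_, ?_, ?_, ?_, ?_⟩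
      · intro j
        refine ih (Es (e j)) (Fs j) φ ?_ ?_ ?_ (hEsmem _)
        · intro q hq; exact (Finset.mem_filter.1 hq).2
        · intro q hq q' hq' hlt
          exact hmono q (Finset.mem_filter.1 hq).1 q' (Finset.mem_filter.1 hq').1 hlt
        · intro q hq; exact hle q (Finset.mem_filter.1 hq).1
      · intro j
        obtain ⟨_, q, hq, hqi⟩ := Finset.mem_filter.1 (e j).2
        exact ⟨q, Finset.mem_filter.2 ⟨hq, hqi⟩⟩
      · intro i j hij q hq q' hq'
        have hqF := (Finset.mem_filter.1 hq).1
        have hq'F := (Finset.mem_filter.1 hq').1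
        have h1 : φ q ∈ Es (e i) := (Finset.mem_filter.1 hq).2
        have h2 : φ q' ∈ Es (e j) := (Finset.mem_filter.1 hq').2
        have heij : (e i : Fin m) < e j := e.strictMono hij
        have hφ : φ q < φ q' := hord _ _ heij _ h1 _ h2
        rcases lt_trichotomy q q' with h | h | h
        · exact h
        · exfalso; rw [h] at hφ; exact lt_irrefl _ hφ
        · exfalso; exact lt_irrefl _ (hφ.trans (hmono q' hq'F q hqF h))
      · intro q hq
        have h1 : φ q ∈ Es (e ⟨0, hm'pos⟩) := (Finset.mem_filter.1 hq).2
        have hqF := (Finset.mem_filter.1 hq).1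
        have hm'le : m' ≤ m := by
          have := Finset.card_le_card (Finset.subset_univ I)
          simpa [hm'] using this
        have hmq : m ≤ (φ q : ℕ) := by
          rcases Nat.eq_zero_or_pos (((e ⟨0, hm'pos⟩ : { x // x ∈ I }) : Fin m) : ℕ) with h | h
          · have : ((e ⟨0, hm'pos⟩ : { x // x ∈ I }) : Fin m) = ⟨0, hm⟩ := Fin.ext h
            rw [this] at h1
            exact hmin _ h1
          · have h : (⟨0, hm⟩ : Fin m) < ((e ⟨0, hm'pos⟩ : { x // x ∈ I }) : Fin m) := h
            obtain ⟨p₀, hp₀⟩ := hEsne ⟨0, hm⟩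
            have := hord _ _ h _ hp₀ _ h1
            exact le_of_lt (lt_of_le_of_lt (hmin _ hp₀) this)
        calc m' ≤ m := hm'le
          _ ≤ (φ q : ℕ) := hmq
          _ ≤ (q : ℕ) := hle q hqF
      · ext q
        simp only [Finset.mem_biUnion, Finset.mem_univ, true_and]
        constructor
        · intro hq
          have := hmaps q hq
          rw [hEeq] at this
          obtain ⟨i, _, hi⟩ := Finset.mem_biUnion.1 this
          have hiI : i ∈ I := Finset.mem_filter.2 ⟨Finset.mem_univ _, q, hq, hi⟩
          obtain ⟨j, hj⟩ := e.surjective ⟨i, hiI⟩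
          refine ⟨j, Finset.mem_filter.2 ⟨hq, ?_⟩⟩
          have : (e j : Fin m) = i := by rw [hj]
          rw [this]; exact hi
        · rintro ⟨j, hj⟩
          exact (Finset.mem_filter.1 hj).1
  | limit o ho ih =>
    intro E F φ hmaps hmono hle hE
    rw [schreier_limit c ho] at *
    rcases hE with hE | ⟨n, h, hEmem, hEmin⟩
    · subst hE
      have : F = ∅ := Finset.eq_empty_of_forall_notMem fun q hq => by
        simpa using hmaps q hq
      exact this ▸ Set.mem_insert _ _
    · refine Set.mem_insert_of_mem _ ⟨n, h, ih _ h E F φ hmaps hmono hle hEmem, ?_⟩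
      intro q hq
      exact le_trans (hEmin _ (hmaps q hq)) (hle q hq)


lemma schreierComb_eq (k : ℕ → ℕ+) (a : ℕ →₀ ℝ) :
    (a.sum fun n r => Finsupp.single (k n) r) = Finsupp.mapDomain k a := rfl

lemma sum_abs_mapDomain (k : ℕ → ℕ+) (hk : Function.Injective k) (a : ℕ →₀ ℝ)
    (E : Finset ℕ+) :
    ∑ p ∈ E, |Finsupp.mapDomain k a p| =
      ∑ n ∈ a.support.filter (fun n => k n ∈ E), |a n| := by
  classical
  set N := a.support.filter (fun n => k n ∈ E) with hN
  have hsub : N.image k ⊆ E := by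
    intro p hp
    obtain ⟨n, hn, rfl⟩ := Finset.mem_image.1 hp
    exact (Finset.mem_filter.1 hn).2
  have h1 : ∑ p ∈ N.image k, |Finsupp.mapDomain k a p| = ∑ p ∈ E, |Finsupp.mapDomain k a p| := by
    apply Finset.sum_subset hsub
    intro p hpE hpN
    by_cases hr : p ∈ Set.range k
    · obtain ⟨n, rfl⟩ := hr
      rw [Finsupp.mapDomain_apply hk]
      by_contra habs
      have han : a n ≠ 0 := fun h => habs (by rw [h]; simp)
      exact hpN (Finset.mem_image.2 ⟨n, Finset.mem_filter.2
        ⟨Finsupp.mem_support_iff.2 han, hpE⟩, rfl⟩)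
    · rw [Finsupp.mapDomain_notin_range _ _ hr]; simp
  rw [← h1, Finset.sum_image (fun n _ n' _ h => hk h)]
  apply Finset.sum_congr rfl
  intro n _
  rw [Finsupp.mapDomain_apply hk]

lemma bddAbove_schreier_sums (S : Set (Finset ℕ+)) (x : ℕ+ →₀ ℝ) :
    BddAbove {r : ℝ | ∃ E ∈ S, r = ∑ n ∈ E, |x n|} := by
  refine ⟨∑ p ∈ x.support, |x p|, ?_⟩
  rintro r ⟨E, _, rfl⟩
  calc ∑ n ∈ E, |x n| ≤ ∑ n ∈ E ∪ x.support, |x n| :=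
        Finset.sum_le_sum_of_subset_of_nonneg Finset.subset_union_left
          (fun _ _ _ => abs_nonneg _)
    _ = ∑ p ∈ x.support, |x p| := by
        refine (Finset.sum_subset Finset.subset_union_right ?_).symm
        intro p _ hp
        rw [Finsupp.notMem_support_iff.1 hp]; simp


/-- The unit vector basis of the Schreier space `X_α` is `1`-right dominant. -/
theorem schreier_one_right_dominant
    (c : Ordinal → ℕ+ → Ordinal) (hc : IsCofinalChoice c)
    (α : Ordinal) (hα : α < Ordinal.omega 1)
    (k l : ℕ → ℕ+) (hk : StrictMono k) (hl : StrictMono l) (hkl : ∀ n, k n ≤ l n) :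
    ∀ a : ℕ →₀ ℝ,
      schreierNorm c α (schreierComb k a) ≤ schreierNorm c α (schreierComb l a) := by
  intro a
  classical
  have hnorm : ∀ (f : ℕ → ℕ+), schreierComb f a = Finsupp.mapDomain f a :=
    fun f => schreierComb_eq f a
  rw [hnorm k, hnorm l]
  unfold schreierNorm
  set xl := Finsupp.mapDomain l a with hxl
  have hbdd : BddAbove {r : ℝ | ∃ E ∈ schreier c α, r = ∑ n ∈ E, |xl n|} :=
    bddAbove_schreier_sums _ _
  have h0 : (0 : ℝ) ∈ {r : ℝ | ∃ E ∈ schreier c α, r = ∑ n ∈ E, |xl n|} :=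
    ⟨∅, empty_mem_schreier c α, by simp⟩
  apply Real.sSup_le _ (le_csSup hbdd h0)
  rintro r ⟨E, hE, rfl⟩
  set N := a.support.filter (fun n => k n ∈ E) with hN
  have hsum1 : ∑ n ∈ E, |Finsupp.mapDomain k a n| = ∑ n ∈ N, |a n| :=
    sum_abs_mapDomain k hk.injective a E
  set F := N.image l with hF
  have hFmem : F ∈ schreier c α := by
    refine schreier_spread c α E F (fun q => k (Function.invFun l q)) ?_ ?_ ?_ hE
    · intro q hq
      obtain ⟨n, hn, rfl⟩ := Finset.mem_image.1 hq
      simp only [Function.leftInverse_invFun hl.injective n]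
      exact (Finset.mem_filter.1 hn).2
    · intro q hq q' hq' hlt
      obtain ⟨n, hn, rfl⟩ := Finset.mem_image.1 hq
      obtain ⟨n', hn', rfl⟩ := Finset.mem_image.1 hq'
      simp only [Function.leftInverse_invFun hl.injective n,
        Function.leftInverse_invFun hl.injective n']
      exact hk (hl.lt_iff_lt.1 hlt)
    · intro q hq
      obtain ⟨n, hn, rfl⟩ := Finset.mem_image.1 hq
      simp only [Function.leftInverse_invFun hl.injective n]
      exact hkl n
  have hfilter : a.support.filter (fun n => l n ∈ F) = N := by
    ext n
    simp only [Finset.mem_filter, hF, Finset.mem_image]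
    constructor
    · rintro ⟨hn, n', hn', hl'⟩
      rwa [← hl.injective hl']
    · intro hn
      exact ⟨(Finset.mem_filter.1 hn).1, n, hn, rfl⟩
  have hsum2 : ∑ n ∈ F, |xl n| = ∑ n ∈ N, |a n| := by
    rw [hxl, sum_abs_mapDomain l hl.injective a F, hfilter]
  rw [hsum1, ← hsum2]
  exact le_csSup hbdd ⟨F, hFmem, rfl⟩


end
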